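/- For real k ≠ 0 and nonzero real c, d, the function q(x,t) = -2kcd/(c² e^{kx + k³t} + d² e^{-kx - k³t}) satisfies the mKdV equation q_t(x,t) = q_{xxx}(x,t) + 6 q(x,t)² q_x(x,t) for all real x, t. -/

import Mathlib

noncomputable def DD (k c d t x : ℝ) : ℝ :=
  c^2 * Real.exp (k * x + k^3 * t) + d^2 * Real.exp (-(k * x + k^3 * t))

noncomputable def NN (k c d t x : ℝ) : ℝ :=
  c^2 * Real.exp (k * x + k^3 * t) - d^2 * Real.exp (-(k * x + k^3 * t))

lemma DD_pos (k c d t x : ℝ) (hc : c ≠ 0) : 0 < DD k c d t x := by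
  unfold DD
  have h1 : 0 < c^2 * Real.exp (k * x + k^3 * t) := by positivity
  have h2 : 0 ≤ d^2 * Real.exp (-(k * x + k^3 * t)) := by positivity
  linarith

lemma hasDerivAt_exp_lin (k m x : ℝ) :
    HasDerivAt (fun y : ℝ => Real.exp (k * y + m)) (k * Real.exp (k * x + m)) x := by
  have h : HasDerivAt (fun y : ℝ => k * y + m) k x := by
    simpa using ((hasDerivAt_id x).const_mul k).add_const m
  simpa [mul_comm] using h.exp

lemma hasDerivAt_exp_lin_neg (k m x : ℝ) :
    HasDerivAt (fun y : ℝ => Real.exp (-(k * y + m))) (-(k * Real.exp (-(k * x + m)))) x := by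
  have h : HasDerivAt (fun y : ℝ => -(k * y + m)) (-k) x := by
    simpa using (((hasDerivAt_id x).const_mul k).add_const m).fun_neg
  simpa [mul_comm] using h.exp

lemma hasDerivAt_DD (k c d t x : ℝ) :
    HasDerivAt (fun y => DD k c d t y) (k * NN k c d t x) x := by
  unfold DD NN
  have h := ((hasDerivAt_exp_lin k (k^3*t) x).const_mul (c^2)).fun_add
    ((hasDerivAt_exp_lin_neg k (k^3*t) x).const_mul (d^2))
  refine h.congr_deriv ?_
  ring

lemma hasDerivAt_NN (k c d t x : ℝ) :
    HasDerivAt (fun y => NN k c d t y) (k * DD k c d t x) x := by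
  unfold DD NN
  have h := ((hasDerivAt_exp_lin k (k^3*t) x).const_mul (c^2)).fun_sub
    ((hasDerivAt_exp_lin_neg k (k^3*t) x).const_mul (d^2))
  refine h.congr_deriv ?_
  ring

lemma hasDerivAt_q0 (k c d t x : ℝ) (hc : c ≠ 0) :
    HasDerivAt (fun y => -2*k*c*d / DD k c d t y)
      (2*k^2*c*d * NN k c d t x / (DD k c d t x)^2) x := by
  have hD := DD_pos k c d t x hc
  have h := (hasDerivAt_const x (-2*k*c*d)).fun_div (hasDerivAt_DD k c d t x) hD.ne'
  refine h.congr_deriv ?_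
  field_simp
  ring

lemma hasDerivAt_q1 (k c d t x : ℝ) (hc : c ≠ 0) :
    HasDerivAt (fun y => 2*k^2*c*d * NN k c d t y / (DD k c d t y)^2)
      (2*k^3*c*d * ((DD k c d t x)^2 - 2*(NN k c d t x)^2) / (DD k c d t x)^3) x := by
  have hD := DD_pos k c d t x hc
  have hnum := (hasDerivAt_NN k c d t x).const_mul (2*k^2*c*d)
  have hden := (hasDerivAt_DD k c d t x).fun_pow 2
  have h := hnum.fun_div hden (by positivity)
  refine h.congr_deriv ?_
  field_simp
  ring

lemma hasDerivAt_q2 (k c d t x : ℝ) (hc : c ≠ 0) :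
    HasDerivAt (fun y => 2*k^3*c*d * ((DD k c d t y)^2 - 2*(NN k c d t y)^2) / (DD k c d t y)^3)
      (2*k^4*c*d * (6*(NN k c d t x)^3 - 5*(DD k c d t x)^2 * NN k c d t x) / (DD k c d t x)^4) x := by
  have hD := DD_pos k c d t x hc
  have hnum := (((hasDerivAt_DD k c d t x).fun_pow 2).fun_sub
    (((hasDerivAt_NN k c d t x).fun_pow 2).const_mul 2)).const_mul (2*k^3*c*d)
  have hden := (hasDerivAt_DD k c d t x).fun_pow 3
  have h := hnum.fun_div hden (by positivity)
  refine h.congr_deriv ?_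
  field_simp
  ring

theorem stmt_12 (k c d : ℝ) (hk : k ≠ 0) (hc : c ≠ 0) (hd : d ≠ 0)
    (q : ℝ → ℝ → ℝ)
    (hq : ∀ x t : ℝ, q x t =
      -2 * k * c * d / (c^2 * Real.exp (k * x + k^3 * t) + d^2 * Real.exp (-(k * x + k^3 * t)))) :
    ∀ x t : ℝ,
      deriv (fun s => q x s) t =
        iteratedDeriv 3 (fun y => q y t) x + 6 * (q x t)^2 * deriv (fun y => q y t) x := by
  intro x t
  -- spatial function
  have hfun : (fun y => q y t) = (fun y => -2*k*c*d / DD k c d t y) := by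
    funext y
    rw [hq]
    simp [DD]
  -- first spatial derivative as a function
  have hd1 : deriv (fun y => q y t) = (fun y => 2*k^2*c*d * NN k c d t y / (DD k c d t y)^2) := by
    funext y
    rw [hfun]
    exact (hasDerivAt_q0 k c d t y hc).deriv
  have hd2 : deriv (deriv (fun y => q y t)) =
      (fun y => 2*k^3*c*d * ((DD k c d t y)^2 - 2*(NN k c d t y)^2) / (DD k c d t y)^3) := by
    funext y
    rw [hd1]
    exact (hasDerivAt_q1 k c d t y hc).deriv
  have hd3 : iteratedDeriv 3 (fun y => q y t) x =
      2*k^4*c*d * (6*(NN k c d t x)^3 - 5*(DD k c d t x)^2 * NN k c d t x) / (DD k c d t x)^4 := by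
    have h3 : iteratedDeriv 3 (fun y => q y t) = deriv (deriv (deriv (fun y => q y t))) := by
      rw [show (3 : ℕ) = 2 + 1 from rfl, iteratedDeriv_succ,
        show (2 : ℕ) = 1 + 1 from rfl, iteratedDeriv_succ, iteratedDeriv_one]
    rw [h3, hd2]
    exact (hasDerivAt_q2 k c d t x hc).deriv
  -- time derivative
  have hdt : deriv (fun s => q x s) t = 2*k^4*c*d * NN k c d t x / (DD k c d t x)^2 := by
    have hfunt : (fun s => q x s) = (fun s => -2*k*c*d / DD k c d s x) := by
      funext s
      rw [hq]
      simp [DD]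
    rw [hfunt]
    have hDt : HasDerivAt (fun s => DD k c d s x) (k^3 * NN k c d t x) t := by
      unfold DD NN
      have hE : HasDerivAt (fun s : ℝ => Real.exp (k * x + k^3 * s))
          (k^3 * Real.exp (k * x + k^3 * t)) t := by
        simpa [add_comm] using hasDerivAt_exp_lin (k^3) (k*x) t
      have hF : HasDerivAt (fun s : ℝ => Real.exp (-(k * x + k^3 * s)))
          (-(k^3 * Real.exp (-(k * x + k^3 * t)))) t := by
        simpa [add_comm] using hasDerivAt_exp_lin_neg (k^3) (k*x) t
      have h := (hE.const_mul (c^2)).fun_add (hF.const_mul (d^2))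
      refine h.congr_deriv ?_
      ring
    have hDpos : 0 < DD k c d t x := DD_pos k c d t x hc
    have h := (hasDerivAt_const t (-2*k*c*d)).fun_div hDt hDpos.ne'
    rw [h.deriv]
    field_simp
    ring
  rw [hdt, hd3, hd1, hq x t]
  beta_reduce
  unfold DD NN
  have key : Real.exp (k * x + k ^ 3 * t) * Real.exp (-(k * x + k ^ 3 * t)) = 1 := by
    rw [← Real.exp_add, show (k * x + k ^ 3 * t) + -(k * x + k ^ 3 * t) = 0 by ring, Real.exp_zero]
  have hEpos := Real.exp_pos (k * x + k ^ 3 * t)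
  have hFpos := Real.exp_pos (-(k * x + k ^ 3 * t))
  generalize hA : Real.exp (k * x + k ^ 3 * t) = E at key hEpos ⊢
  generalize hB : Real.exp (-(k * x + k ^ 3 * t)) = F at key hFpos ⊢
  have hEne : E ≠ 0 := hEpos.ne'
  have hDne : c ^ 2 * E + d ^ 2 * F ≠ 0 := by positivity
  have hF : F = E⁻¹ := by
    field_simp
    linear_combination key
  subst hF
  field_simp
  ring
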